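/- For every positive integer t and every balanced companion family S₁, …, S_{2t+2} on {1,…,4(t+1)}, there exists a collection of popularity swaps of magnitude 1, i.e., a permutation π of {1,…,4(t+1)} with π∘π = id and |π(i) − i| ≤ 1 for all i, such that Σ_{i=1}^{t+1} |Σ_{x∈S_{2i−1}} π(x) − Σ_{x∈S_{2i}} π(x)| ≥ (2/3)(t + 2/3). Equivalently, the worst-case total set discrepancy under magnitude-1 swaps of any balanced companion family is at least (2/3)(t + 2/3). -/

import Mathlib

/-- An (indexed) balanced companion family on `{1,…,4(t+1)}`: pairwise disjoint
2-element subsets `S 1, …, S (2t+2)` of `{1,…,4(t+1)}` whose union is all of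
`{1,…,4(t+1)}`, such that for each `i = 1,…,t+1` the companion sets `S (2i-1)`
and `S (2i)` have equal element sums. -/
def IsBalancedCompanionFamily (t : ℕ) (S : ℕ → Finset ℕ) : Prop :=
  (∀ i ∈ Finset.Icc 1 (2*t+2), S i ⊆ Finset.Icc 1 (4*(t+1)) ∧ (S i).card = 2) ∧
  (∀ i ∈ Finset.Icc 1 (2*t+2), ∀ j ∈ Finset.Icc 1 (2*t+2),
    i ≠ j → Disjoint (S i) (S j)) ∧
  (Finset.Icc 1 (2*t+2)).biUnion S = Finset.Icc 1 (4*(t+1)) ∧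
  ∀ i ∈ Finset.Icc 1 (t+1), (S (2*i-1)).sum id = (S (2*i)).sum id

/-- A collection of popularity swaps of magnitude `p` on `{1,…,v}`: a permutation
`π` of `{1,…,v}` with `π ∘ π = id` and `|π i − i| ≤ p` for every `i ∈ {1,…,v}`. -/
def IsSwapCollection (v p : ℕ) (π : ℕ → ℕ) : Prop :=
  (∀ i ∈ Finset.Icc 1 v, π i ∈ Finset.Icc 1 v) ∧
  (∀ i ∈ Finset.Icc 1 v, π (π i) = i) ∧
  (∀ i ∈ Finset.Icc 1 v, |(π i : ℤ) - (i : ℤ)| ≤ (p : ℤ))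

/-- The total set discrepancy of the family `S` under the swap collection `π`:
`∑_{i=1}^{t+1} |∑_{x ∈ S (2i-1)} π x − ∑_{x ∈ S (2i)} π x|`. -/
def totalSetDiscrepancy (t : ℕ) (S : ℕ → Finset ℕ) (π : ℕ → ℕ) : ℤ :=
  ∑ i ∈ Finset.Icc 1 (t+1),
    |((S (2*i-1)).sum fun x => (π x : ℤ)) - ((S (2*i)).sum fun x => (π x : ℤ))|

open Finset

def flipv (X : Finset ℕ) (v : ℕ) : Finset ℕ :=
  if v ∈ X then X.erase v else insert v X

lemma flipv_subset {X V : Finset ℕ} {v : ℕ} (hX : X ⊆ V) (hv : v ∈ V) : flipv X v ⊆ V := by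
  unfold flipv; split_ifs
  · exact (Finset.erase_subset _ _).trans hX
  · exact Finset.insert_subset hv hX

lemma sum_flipv (X : Finset ℕ) (v : ℕ) (g : ℕ → ℤ) :
    ∑ u ∈ flipv X v, g u = (∑ u ∈ X, g u) + (if v ∈ X then -g v else g v) := by
  unfold flipv; split_ifs with h
  · rw [Finset.sum_erase_eq_sub h]; ring
  · rw [Finset.sum_insert h]; ring

lemma flipv_flipv (X : Finset ℕ) (v : ℕ) : flipv (flipv X v) v = X := by
  unfold flipv; split_ifs with h h2 h2
  · exact absurd (Finset.mem_erase.mp h2).1 (by simp)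
  · exact Finset.insert_erase h
  · exact Finset.erase_insert h
  · exact absurd (Finset.mem_insert_self v X) h2

lemma halving (U : Finset ℕ) (g : ℕ → ℤ) (v₀ : ℕ) (hv₀ : v₀ ∈ U) (hg : g v₀ ≠ 0) :
    2 * ((U.powerset.filter (fun Y => (∑ v ∈ Y, g v) = 0)).card) ≤ U.powerset.card := by
  classical
  have hinj : ∀ Y ∈ U.powerset.filter (fun Y => (∑ v ∈ Y, g v) = 0),
      flipv Y v₀ ∈ U.powerset.filter (fun Y => ¬ ((∑ v ∈ Y, g v) = 0)) := by
    intro Y hY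
    obtain ⟨hYp, hY0⟩ := Finset.mem_filter.mp hY
    refine Finset.mem_filter.mpr ⟨Finset.mem_powerset.mpr
      (flipv_subset (Finset.mem_powerset.mp hYp) hv₀), ?_⟩
    rw [sum_flipv, hY0]
    split_ifs <;> simpa
  have hle : (U.powerset.filter (fun Y => (∑ v ∈ Y, g v) = 0)).card ≤
      (U.powerset.filter (fun Y => ¬ ((∑ v ∈ Y, g v) = 0))).card := by
    apply Finset.card_le_card_of_injOn (fun Y => flipv Y v₀) hinj
    intro a _ b _ hab
    have := congrArg (fun s => flipv s v₀) hab
    simpa [flipv_flipv] using this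
  have htot := Finset.card_filter_add_card_filter_not
    (s := U.powerset) (p := fun Y => (∑ v ∈ Y, g v) = 0)
  omega

lemma exists_two_sat (U : Finset ℕ) (g h : ℕ → ℤ)
    (hg : ∃ v ∈ U, g v ≠ 0) (hh : ∃ v ∈ U, h v ≠ 0) :
    ∃ Y, Y ⊆ U ∧ (∑ v ∈ Y, g v) ≠ 0 ∧ (∑ v ∈ Y, h v) ≠ 0 := by
  classical
  obtain ⟨vg, hvg, hvg0⟩ := hg
  obtain ⟨vh, hvh, hvh0⟩ := hh
  have h1 := halving U g vg hvg hvg0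
  have h2 := halving U h vh hvh hvh0
  have hmem : (∅ : Finset ℕ) ∈ (U.powerset.filter (fun Y => (∑ v ∈ Y, g v) = 0)) ∩
      (U.powerset.filter (fun Y => (∑ v ∈ Y, h v) = 0)) := by simp
  have hIcap : 1 ≤ ((U.powerset.filter (fun Y => (∑ v ∈ Y, g v) = 0)) ∩
      (U.powerset.filter (fun Y => (∑ v ∈ Y, h v) = 0))).card := Finset.card_pos.mpr ⟨∅, hmem⟩
  have hui := Finset.card_union_add_card_inter
    (U.powerset.filter (fun Y => (∑ v ∈ Y, g v) = 0))
    (U.powerset.filter (fun Y => (∑ v ∈ Y, h v) = 0))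
  have hcard : ((U.powerset.filter (fun Y => (∑ v ∈ Y, g v) = 0)) ∪
      (U.powerset.filter (fun Y => (∑ v ∈ Y, h v) = 0))).card < U.powerset.card := by omega
  have hnot : ¬ (U.powerset ⊆ (U.powerset.filter (fun Y => (∑ v ∈ Y, g v) = 0)) ∪
      (U.powerset.filter (fun Y => (∑ v ∈ Y, h v) = 0))) := by
    intro hsub
    exact absurd (Finset.card_le_card hsub) (by omega)
  obtain ⟨Y, hYp, hYn⟩ := Finset.not_subset.mp hnot
  refine ⟨Y, Finset.mem_powerset.mp hYp, ?_, ?_⟩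
  · intro h0
    exact hYn (Finset.mem_union_left _ (Finset.mem_filter.mpr ⟨hYp, h0⟩))
  · intro h0
    exact hYn (Finset.mem_union_right _ (Finset.mem_filter.mpr ⟨hYp, h0⟩))

lemma extend3 (f : ℕ → ℕ → ℤ) (V I : Finset ℕ)
    (i_s i_a i_b va vb : ℕ)
    (hs : i_s ∈ I) (ha : i_a ∈ I) (hb : i_b ∈ I)
    (hsa : i_s ≠ i_a) (hsb : i_s ≠ i_b) (hab : i_a ≠ i_b)
    (hvaV : va ∈ V) (hvbV : vb ∈ V)
    (hfa : f i_a va ≠ 0) (hfb : f i_b vb ≠ 0) (hba : f i_b va = 0)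
    (hva_out : ∀ i ∈ I, i ≠ i_s → i ≠ i_a → i ≠ i_b → f i va = 0)
    (hvb_out : ∀ i ∈ I, i ≠ i_s → i ≠ i_a → i ≠ i_b → f i vb = 0)
    (hprev : ∃ X, X ⊆ V ∧ 2 * ((((I.erase i_s).erase i_a).erase i_b).card) ≤
        3 * ((((I.erase i_s).erase i_a).erase i_b).filter
              (fun i => (∑ v ∈ X, f i v) ≠ 0)).card) :
    ∃ X, X ⊆ V ∧ 2 * I.card ≤ 3 * (I.filter (fun i => (∑ v ∈ X, f i v) ≠ 0)).card := by
  classical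
  obtain ⟨X, hXV, hX⟩ := hprev
  set I' := ((I.erase i_s).erase i_a).erase i_b with hI'
  have hI'mem : ∀ i ∈ I', i ∈ I ∧ i ≠ i_s ∧ i ≠ i_a ∧ i ≠ i_b := by
    intro i hi
    have h3 := Finset.mem_erase.mp hi
    have h2 := Finset.mem_erase.mp h3.2
    have h1 := Finset.mem_erase.mp h2.2
    exact ⟨h1.2, h1.1, h2.1, h3.1⟩
  -- first toggle for i_b at vb
  set X₁ := if (∑ u ∈ X, f i_b u) ≠ 0 then X else flipv X vb with hX₁
  have hX₁V : X₁ ⊆ V := by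
    rw [hX₁]; split_ifs
    · exact hXV
    · exact flipv_subset hXV hvbV
  have hX₁b : (∑ u ∈ X₁, f i_b u) ≠ 0 := by
    rw [hX₁]; split_ifs with hcase
    · exact hcase
    · push_neg at hcase
      rw [sum_flipv, hcase]
      split_ifs <;> simpa
  have hX₁keep : ∀ i : ℕ, f i vb = 0 → (∑ u ∈ X₁, f i u) = ∑ u ∈ X, f i u := by
    intro i hz
    rw [hX₁]; split_ifs with hcase
    · rfl
    · rw [sum_flipv, hz]; split_ifs <;> ring
  -- second toggle for i_a at va
  set X₂ := if (∑ u ∈ X₁, f i_a u) ≠ 0 then X₁ else flipv X₁ va with hX₂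
  have hX₂V : X₂ ⊆ V := by
    rw [hX₂]; split_ifs
    · exact hX₁V
    · exact flipv_subset hX₁V hvaV
  have hX₂a : (∑ u ∈ X₂, f i_a u) ≠ 0 := by
    rw [hX₂]; split_ifs with hcase
    · exact hcase
    · push_neg at hcase
      rw [sum_flipv, hcase]
      split_ifs <;> simpa
  have hX₂keep : ∀ i : ℕ, f i va = 0 → (∑ u ∈ X₂, f i u) = ∑ u ∈ X₁, f i u := by
    intro i hz
    rw [hX₂]; split_ifs with hcase
    · rfl
    · rw [sum_flipv, hz]; split_ifs <;> ring
  have hX₂b : (∑ u ∈ X₂, f i_b u) ≠ 0 := by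
    rw [hX₂keep i_b hba]; exact hX₁b
  have hkeep : ∀ i ∈ I', (∑ u ∈ X₂, f i u) = ∑ u ∈ X, f i u := by
    intro i hi
    obtain ⟨hiI, h1, h2, h3⟩ := hI'mem i hi
    rw [hX₂keep i (hva_out i hiI h1 h2 h3), hX₁keep i (hvb_out i hiI h1 h2 h3)]
  -- count
  have hsubset : insert i_a (insert i_b (I'.filter (fun i => (∑ u ∈ X, f i u) ≠ 0)))
      ⊆ I.filter (fun i => (∑ u ∈ X₂, f i u) ≠ 0) := by
    intro x hx
    rcases Finset.mem_insert.mp hx with rfl | hx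
    · exact Finset.mem_filter.mpr ⟨ha, hX₂a⟩
    rcases Finset.mem_insert.mp hx with rfl | hx
    · exact Finset.mem_filter.mpr ⟨hb, hX₂b⟩
    · obtain ⟨hxI', hxs⟩ := Finset.mem_filter.mp hx
      refine Finset.mem_filter.mpr ⟨(hI'mem x hxI').1, ?_⟩
      rw [hkeep x hxI']; exact hxs
  have hbnotin : i_b ∉ I'.filter (fun i => (∑ u ∈ X, f i u) ≠ 0) := by
    intro hcon
    exact absurd rfl (hI'mem i_b (Finset.mem_filter.mp hcon).1).2.2.2
  have hanotin : i_a ∉ insert i_b (I'.filter (fun i => (∑ u ∈ X, f i u) ≠ 0)) := by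
    intro hcon
    rcases Finset.mem_insert.mp hcon with hcon | hcon
    · exact hab hcon
    · exact absurd rfl (hI'mem i_a (Finset.mem_filter.mp hcon).1).2.2.1
  have hcard := Finset.card_le_card hsubset
  rw [Finset.card_insert_of_notMem hanotin, Finset.card_insert_of_notMem hbnotin] at hcard
  -- card of I'
  have hmb : i_b ∈ (I.erase i_s).erase i_a :=
    Finset.mem_erase.mpr ⟨hab.symm, Finset.mem_erase.mpr ⟨hsb.symm, hb⟩⟩
  have hma : i_a ∈ I.erase i_s := Finset.mem_erase.mpr ⟨hsa.symm, ha⟩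
  have hc1 : ((I.erase i_s).erase i_a).card + 1 = (I.erase i_s).card :=
    Finset.card_erase_add_one hma
  have hc2 : I'.card + 1 = ((I.erase i_s).erase i_a).card := Finset.card_erase_add_one hmb
  have hc3 : (I.erase i_s).card + 1 = I.card := Finset.card_erase_add_one hs
  refine ⟨X₂, hX₂V, ?_⟩
  omega

lemma lemmaA (f : ℕ → ℕ → ℤ) (V : Finset ℕ) (I : Finset ℕ)
    (hne : ∀ i ∈ I, ∃ v ∈ V, f i v ≠ 0)
    (hdeg : ∀ v ∈ V, (I.filter (fun i => f i v ≠ 0)).card ≤ 2) :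
    ∃ X, X ⊆ V ∧
      2 * I.card ≤ 3 * (I.filter (fun i => (∑ v ∈ X, f i v) ≠ 0)).card := by
  classical
  revert hne hdeg
  induction I using Finset.strongInduction with
  | _ I IH =>
  intro hne hdeg
  rcases Finset.eq_empty_or_nonempty I with rfl | ⟨i₀, hi₀I⟩
  · exact ⟨∅, by simp⟩
  -- helper for applying IH
  have IH' : ∀ J : Finset ℕ, J ⊂ I → ∃ X, X ⊆ V ∧
      2 * J.card ≤ 3 * (J.filter (fun i => (∑ v ∈ X, f i v) ≠ 0)).card := by
    intro J hJ
    refine IH J hJ (fun i hi => hne i (hJ.1 hi)) (fun v hv => ?_)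
    exact le_trans (Finset.card_le_card (Finset.filter_subset_filter _ hJ.1)) (hdeg v hv)
  have hdeg3 : ∀ v ∈ V, ∀ a ∈ I, ∀ b ∈ I, ∀ c ∈ I,
      f a v ≠ 0 → f b v ≠ 0 → f c v ≠ 0 → a ≠ b → a ≠ c → b ≠ c → False := by
    intro v hv a haI b hbI c hcI hfa hfb hfc hab hac hbc
    have hsub : ({a, b, c} : Finset ℕ) ⊆ I.filter (fun i => f i v ≠ 0) := by
      intro x hx
      simp only [Finset.mem_insert, Finset.mem_singleton] at hx
      rcases hx with rfl | rfl | rfl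
      · exact Finset.mem_filter.mpr ⟨haI, hfa⟩
      · exact Finset.mem_filter.mpr ⟨hbI, hfb⟩
      · exact Finset.mem_filter.mpr ⟨hcI, hfc⟩
    have h3 : ({a, b, c} : Finset ℕ).card = 3 := by
      rw [Finset.card_insert_of_notMem (by simp [hab, hac]),
        Finset.card_insert_of_notMem (by simp [hbc]), Finset.card_singleton]
    have := Finset.card_le_card hsub
    have := hdeg v hv
    omega
  by_cases h1 : ∃ i ∈ I, ∃ v ∈ V, f i v ≠ 0 ∧ ∀ i' ∈ I, i' ≠ i → f i' v = 0
  · -- Case 1 : private variable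
    obtain ⟨i, hiI, v, hvV, hfiv, hpriv⟩ := h1
    obtain ⟨X, hXV, hX⟩ := IH' (I.erase i) (Finset.erase_ssubset hiI)
    set X' := if (∑ u ∈ X, f i u) ≠ 0 then X else flipv X v with hX'def
    have hX'V : X' ⊆ V := by
      rw [hX'def]; split_ifs
      · exact hXV
      · exact flipv_subset hXV hvV
    have hsat_i : (∑ u ∈ X', f i u) ≠ 0 := by
      rw [hX'def]; split_ifs with hc
      · exact hc
      · push_neg at hc
        rw [sum_flipv, hc]
        split_ifs <;> simpa
    have hkeep : ∀ i' ∈ I.erase i, (∑ u ∈ X', f i' u) = ∑ u ∈ X, f i' u := by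
      intro i' hi'
      have hz : f i' v = 0 := hpriv i' (Finset.mem_of_mem_erase hi') (Finset.ne_of_mem_erase hi')
      rw [hX'def]; split_ifs with hc
      · rfl
      · rw [sum_flipv, hz]; split_ifs <;> ring
    have hsubset : insert i ((I.erase i).filter (fun i'' => (∑ u ∈ X, f i'' u) ≠ 0))
        ⊆ I.filter (fun i'' => (∑ u ∈ X', f i'' u) ≠ 0) := by
      intro a haa
      rcases Finset.mem_insert.mp haa with rfl | haa
      · exact Finset.mem_filter.mpr ⟨hiI, hsat_i⟩
      · obtain ⟨h1', h2'⟩ := Finset.mem_filter.mp haa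
        refine Finset.mem_filter.mpr ⟨Finset.mem_of_mem_erase h1', ?_⟩
        rw [hkeep _ h1']; exact h2'
    have hnotin : i ∉ (I.erase i).filter (fun i'' => (∑ u ∈ X, f i'' u) ≠ 0) := by
      intro hcon
      exact Finset.notMem_erase i I (Finset.mem_filter.mp hcon).1
    have hcard := Finset.card_le_card hsubset
    rw [Finset.card_insert_of_notMem hnotin] at hcard
    have hIc := Finset.card_erase_add_one hiI
    exact ⟨X', hX'V, by omega⟩
  -- Case 2
  push_neg at h1
  obtain ⟨v₀, hv₀V, hf₀⟩ := hne i₀ hi₀I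
  obtain ⟨i₁, hi₁I, hi₁ne, hf₁⟩ := h1 i₀ hi₀I v₀ hv₀V hf₀
  by_cases h2a : ∃ v ∈ V, ∃ i₂ ∈ I, f i₀ v ≠ 0 ∧ f i₂ v ≠ 0 ∧ i₂ ≠ i₀ ∧ i₂ ≠ i₁
  · -- Case 2a
    obtain ⟨v, hvV, i₂, hi₂I, hfi₀v, hfi₂v, hne20, hne21⟩ := h2a
    refine extend3 f V I i₀ i₁ i₂ v₀ v hi₀I hi₁I hi₂I (Ne.symm hi₁ne) (Ne.symm hne20)
      (Ne.symm hne21) hv₀V hvV hf₁ hfi₂v ?_ ?_ ?_ ?_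
    · -- f i₂ v₀ = 0
      by_contra hcon
      exact hdeg3 v₀ hv₀V i₀ hi₀I i₁ hi₁I i₂ hi₂I hf₀ hf₁ hcon
        (Ne.symm hi₁ne) (Ne.symm hne20) (Ne.symm hne21)
    · intro i hiI h1' h2' h3'
      by_contra hcon
      exact hdeg3 v₀ hv₀V i₀ hi₀I i₁ hi₁I i hiI hf₀ hf₁ hcon (Ne.symm hi₁ne)
        (Ne.symm h1') (Ne.symm h2')
    · intro i hiI h1' h2' h3'
      by_contra hcon
      exact hdeg3 v hvV i₀ hi₀I i₂ hi₂I i hiI hfi₀v hfi₂v hcon (Ne.symm hne20)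
        (Ne.symm h1') (Ne.symm h3')
    · refine IH' _ ?_
      refine _root_.ssubset_of_subset_of_ssubset ?_ (Finset.erase_ssubset hi₀I)
      exact ((Finset.erase_subset _ _).trans (Finset.erase_subset _ _))
  push_neg at h2a
  by_cases h2b : ∃ v ∈ V, ∃ i₂ ∈ I, f i₁ v ≠ 0 ∧ f i₂ v ≠ 0 ∧ i₂ ≠ i₀ ∧ i₂ ≠ i₁
  · -- Case 2b
    obtain ⟨v', hv'V, i₂, hi₂I, hfi₁v', hfi₂v', hne20, hne21⟩ := h2b
    have hfi₀v' : f i₀ v' = 0 := by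
      by_contra hcon
      exact hne21 (h2a v' hv'V i₂ hi₂I hcon hfi₂v' hne20)
    refine extend3 f V I i₁ i₀ i₂ v₀ v' hi₁I hi₀I hi₂I hi₁ne (Ne.symm hne21)
      (Ne.symm hne20) hv₀V hv'V hf₀ hfi₂v' ?_ ?_ ?_ ?_
    · -- f i₂ v₀ = 0
      by_contra hcon
      exact hdeg3 v₀ hv₀V i₀ hi₀I i₁ hi₁I i₂ hi₂I hf₀ hf₁ hcon
        (Ne.symm hi₁ne) (Ne.symm hne20) (Ne.symm hne21)
    · intro i hiI h1' h2' h3'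
      by_contra hcon
      exact hdeg3 v₀ hv₀V i₀ hi₀I i₁ hi₁I i hiI hf₀ hf₁ hcon (Ne.symm hi₁ne)
        (Ne.symm h2') (Ne.symm h1')
    · intro i hiI h1' h2' h3'
      by_contra hcon
      exact hdeg3 v' hv'V i₁ hi₁I i₂ hi₂I i hiI hfi₁v' hfi₂v' hcon (Ne.symm hne21)
        (Ne.symm h1') (Ne.symm h3')
    · refine IH' _ ?_
      refine _root_.ssubset_of_subset_of_ssubset ?_ (Finset.erase_ssubset hi₁I)
      exact ((Finset.erase_subset _ _).trans (Finset.erase_subset _ _))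
  -- Case 2c
  push_neg at h2b
  have hU_out : ∀ i ∈ I, i ≠ i₀ → i ≠ i₁ → ∀ v ∈ V,
      (f i₀ v ≠ 0 ∨ f i₁ v ≠ 0) → f i v = 0 := by
    intro i hiI hne0 hne1 v hvV hor
    by_contra hcon
    rcases hor with h | h
    · rcases (em (i = i₁)) with rfl | hne1'
      · exact hne1 rfl
      · exact hne1' (h2a v hvV i hiI h hcon hne0)
    · exact hne1 (h2b v hvV i hiI h hcon hne0)
  set U := V.filter (fun v => f i₀ v ≠ 0 ∨ f i₁ v ≠ 0) with hUdef
  obtain ⟨X, hXV, hX⟩ := IH' ((I.erase i₀).erase i₁)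
    (_root_.ssubset_of_subset_of_ssubset (Finset.erase_subset _ _) (Finset.erase_ssubset hi₀I))
  obtain ⟨Y, hYU, hYg, hYh⟩ := exists_two_sat U (f i₀) (f i₁)
    ⟨v₀, Finset.mem_filter.mpr ⟨hv₀V, Or.inl hf₀⟩, hf₀⟩
    ⟨v₀, Finset.mem_filter.mpr ⟨hv₀V, Or.inl hf₀⟩, hf₁⟩
  set X' := (X \ U) ∪ Y with hX'def
  have hUV : U ⊆ V := Finset.filter_subset _ _
  have hX'V : X' ⊆ V := Finset.union_subset ((Finset.sdiff_subset).trans hXV) (hYU.trans hUV)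
  have hdisj : Disjoint (X \ U) Y :=
    Finset.disjoint_of_subset_right hYU (Finset.sdiff_disjoint)
  have hsplit : ∀ g : ℕ → ℤ, (∑ u ∈ X', g u) = (∑ u ∈ X \ U, g u) + ∑ u ∈ Y, g u := by
    intro g; rw [hX'def, Finset.sum_union hdisj]
  have hnotU : ∀ x ∈ X \ U, f i₀ x = 0 ∧ f i₁ x = 0 := by
    intro x hx
    obtain ⟨hxX, hxU⟩ := Finset.mem_sdiff.mp hx
    have hxV := hXV hxX
    by_contra hcon
    rw [not_and_or] at hcon
    exact hxU (Finset.mem_filter.mpr ⟨hxV, by tauto⟩)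
  have hsat0 : (∑ u ∈ X', f i₀ u) ≠ 0 := by
    rw [hsplit, Finset.sum_eq_zero (fun x hx => (hnotU x hx).1), zero_add]; exact hYg
  have hsat1 : (∑ u ∈ X', f i₁ u) ≠ 0 := by
    rw [hsplit, Finset.sum_eq_zero (fun x hx => (hnotU x hx).2), zero_add]; exact hYh
  have hkeep : ∀ i ∈ (I.erase i₀).erase i₁, (∑ u ∈ X', f i u) = ∑ u ∈ X, f i u := by
    intro i hi
    have h1' := Finset.mem_erase.mp hi
    have h2' := Finset.mem_erase.mp h1'.2
    have hz : ∀ v ∈ U, f i v = 0 := by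
      intro v hv
      have hvf := Finset.mem_filter.mp hv
      exact hU_out i h2'.2 h2'.1 h1'.1 v hvf.1 hvf.2
    rw [hsplit]
    have hY0 : (∑ u ∈ Y, f i u) = 0 := Finset.sum_eq_zero (fun v hv => hz v (hYU hv))
    have hXd : (∑ u ∈ X \ U, f i u) = ∑ u ∈ X, f i u := by
      apply Finset.sum_subset (Finset.sdiff_subset)
      intro x hxX hxnot
      have : x ∈ U := by
        by_contra hcon
        exact hxnot (Finset.mem_sdiff.mpr ⟨hxX, hcon⟩)
      exact hz x this
    rw [hY0, hXd, add_zero]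
  have hsubset : insert i₀ (insert i₁ (((I.erase i₀).erase i₁).filter
      (fun i => (∑ u ∈ X, f i u) ≠ 0)))
      ⊆ I.filter (fun i => (∑ u ∈ X', f i u) ≠ 0) := by
    intro x hx
    rcases Finset.mem_insert.mp hx with rfl | hx
    · exact Finset.mem_filter.mpr ⟨hi₀I, hsat0⟩
    rcases Finset.mem_insert.mp hx with rfl | hx
    · exact Finset.mem_filter.mpr ⟨hi₁I, hsat1⟩
    · obtain ⟨hxI', hxs⟩ := Finset.mem_filter.mp hx
      have h1' := Finset.mem_erase.mp hxI'
      have h2' := Finset.mem_erase.mp h1'.2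
      refine Finset.mem_filter.mpr ⟨h2'.2, ?_⟩
      rw [hkeep x hxI']; exact hxs
  have h1notin : i₁ ∉ ((I.erase i₀).erase i₁).filter (fun i => (∑ u ∈ X, f i u) ≠ 0) := by
    intro hcon
    exact Finset.notMem_erase i₁ _ (Finset.mem_filter.mp hcon).1
  have h0notin : i₀ ∉ insert i₁ (((I.erase i₀).erase i₁).filter
      (fun i => (∑ u ∈ X, f i u) ≠ 0)) := by
    intro hcon
    rcases Finset.mem_insert.mp hcon with hcon | hcon
    · exact hi₁ne hcon.symm
    · have := (Finset.mem_filter.mp hcon).1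
      exact Finset.notMem_erase i₀ _ (Finset.mem_of_mem_erase this)
  have hcard := Finset.card_le_card hsubset
  rw [Finset.card_insert_of_notMem h0notin, Finset.card_insert_of_notMem h1notin] at hcard
  have hmb : i₁ ∈ I.erase i₀ := Finset.mem_erase.mpr ⟨hi₁ne, hi₁I⟩
  have hc1 := Finset.card_erase_add_one hmb
  have hc2 := Finset.card_erase_add_one hi₀I
  exact ⟨X', hX'V, by omega⟩

def gTd (T : Finset ℕ) (j : ℕ) : ℤ :=
  (if 2*j-1 ∈ T then 1 else 0) - (if 2*j ∈ T then 1 else 0)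

def ffd (S : ℕ → Finset ℕ) (i j : ℕ) : ℤ := gTd (S (2*i-1)) j - gTd (S (2*i)) j

def swapPi (X : Finset ℕ) (x : ℕ) : ℕ :=
  if (x+1)/2 ∈ X then (if x % 2 = 1 then x + 1 else x - 1) else x

lemma gTd_eq_sum (T : Finset ℕ) (j : ℕ) :
    gTd T j = ∑ x ∈ T, ((if x = 2*j-1 then (1:ℤ) else 0) - (if x = 2*j then 1 else 0)) := by
  rw [Finset.sum_sub_distrib, Finset.sum_ite_eq' T (2*j-1) (fun _ => (1:ℤ)),
    Finset.sum_ite_eq' T (2*j) (fun _ => (1:ℤ))]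
  rfl

lemma key_sum (X T : Finset ℕ) (hX : ∀ j ∈ X, 1 ≤ j) (hT : ∀ x ∈ T, 1 ≤ x) :
    ∑ x ∈ T, (swapPi X x : ℤ) = (∑ x ∈ T, (x:ℤ)) + ∑ j ∈ X, gTd T j := by
  classical
  have hcomm : ∑ j ∈ X, gTd T j
      = ∑ x ∈ T, ∑ j ∈ X, ((if x = 2*j-1 then (1:ℤ) else 0) - (if x = 2*j then 1 else 0)) := by
    simp_rw [gTd_eq_sum]
    rw [Finset.sum_comm]
  rw [hcomm, ← Finset.sum_add_distrib]
  apply Finset.sum_congr rfl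
  intro x hx
  have hx1 : 1 ≤ x := hT x hx
  by_cases hp : (x+1)/2 ∈ X
  · have hb := hX _ hp
    have hsum : ∑ j ∈ X, ((if x = 2*j-1 then (1:ℤ) else 0) - (if x = 2*j then 1 else 0))
        = (if x = 2*((x+1)/2)-1 then (1:ℤ) else 0) - (if x = 2*((x+1)/2) then 1 else 0) := by
      apply Finset.sum_eq_single_of_mem _ hp
      intro b hbX hbne
      have hb1 := hX b hbX
      have e1 : x ≠ 2*b-1 := by omega
      have e2 : x ≠ 2*b := by omega
      simp [e1, e2]
    rw [hsum]
    by_cases hpar : x % 2 = 1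
    · have e1 : x = 2*((x+1)/2)-1 := by omega
      have e2 : x ≠ 2*((x+1)/2) := by omega
      have hpi : swapPi X x = x + 1 := by
        unfold swapPi; rw [if_pos hp, if_pos hpar]
      rw [hpi, if_pos e1, if_neg e2]
      push_cast
      ring
    · have e1 : x ≠ 2*((x+1)/2)-1 := by omega
      have e2 : x = 2*((x+1)/2) := by omega
      have hpi : swapPi X x = x - 1 := by
        unfold swapPi; rw [if_pos hp, if_neg hpar]
      rw [hpi, if_neg e1, if_pos e2]
      omega
  · have hsum : ∑ j ∈ X, ((if x = 2*j-1 then (1:ℤ) else 0) - (if x = 2*j then 1 else 0)) = 0 := by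
      apply Finset.sum_eq_zero
      intro b hbX
      have hb1 := hX b hbX
      have hbne : b ≠ (x+1)/2 := fun hcon => hp (hcon ▸ hbX)
      have e1 : x ≠ 2*b-1 := by omega
      have e2 : x ≠ 2*b := by omega
      simp [e1, e2]
    have hpi : swapPi X x = x := by unfold swapPi; rw [if_neg hp]
    rw [hsum, hpi, add_zero]

lemma swapPi_swap (t : ℕ) (X : Finset ℕ) (hX : X ⊆ Finset.Icc 1 (2*t+2)) :
    IsSwapCollection (4*(t+1)) 1 (swapPi X) := by
  have hXb : ∀ j ∈ X, 1 ≤ j ∧ j ≤ 2*t+2 := by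
    intro j hj
    exact Finset.mem_Icc.mp (hX hj)
  refine ⟨?_, ?_, ?_⟩
  · intro x hx
    have hx' := Finset.mem_Icc.mp hx
    rw [Finset.mem_Icc]
    unfold swapPi
    split_ifs with hp hpar
    · have := hXb _ hp; omega
    · have := hXb _ hp; omega
    · omega
  · intro x hx
    have hx' := Finset.mem_Icc.mp hx
    unfold swapPi
    by_cases hp : (x+1)/2 ∈ X
    · by_cases hpar : x % 2 = 1
      · rw [if_pos hp, if_pos hpar]
        have h1 : (x+1+1)/2 = (x+1)/2 := by omega
        have h2 : ¬ ((x+1) % 2 = 1) := by omega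
        rw [h1, if_pos hp, if_neg h2]
        omega
      · rw [if_pos hp, if_neg hpar]
        have h1 : (x-1+1)/2 = (x+1)/2 := by omega
        have h2 : (x-1) % 2 = 1 := by omega
        rw [h1, if_pos hp, if_pos h2]
        omega
    · rw [if_neg hp, if_neg hp]
  · intro x hx
    unfold swapPi
    rw [abs_le]
    constructor <;> (split_ifs <;> omega)

lemma domino_of_zero (t : ℕ) (A B : Finset ℕ)
    (hAsub : A ⊆ Finset.Icc 1 (4*(t+1))) (hAcard : A.card = 2)
    (hdisj : Disjoint A B)
    (hz : ∀ j ∈ Finset.Icc 1 (2*t+2), gTd A j - gTd B j = 0) :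
    ∃ p, 1 ≤ p ∧ p ≤ 2*t+2 ∧ A = {2*p-1, 2*p} := by
  classical
  have hA2 : A.Nonempty := Finset.card_pos.mp (by omega)
  obtain ⟨a, ha⟩ := hA2
  have haIcc := Finset.mem_Icc.mp (hAsub ha)
  set p := (a+1)/2 with hp
  have hpIcc : 1 ≤ p ∧ p ≤ 2*t+2 := by omega
  have hzp := hz p (Finset.mem_Icc.mpr hpIcc)
  have hax : a = 2*p-1 ∨ a = 2*p := by omega
  have hdAB := Finset.disjoint_left.mp hdisj
  have hboth : 2*p-1 ∈ A ∧ 2*p ∈ A := by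
    by_cases h1 : 2*p-1 ∈ A <;> by_cases h2 : 2*p ∈ A
    · exact ⟨h1, h2⟩
    · exfalso
      by_cases hb1 : 2*p-1 ∈ B <;> by_cases hb2 : 2*p ∈ B <;>
        simp only [gTd, h1, h2, hb1, hb2, if_true, if_false] at hzp <;>
        first
          | omega
          | exact hdAB h1 hb1
    · exfalso
      by_cases hb1 : 2*p-1 ∈ B <;> by_cases hb2 : 2*p ∈ B <;>
        simp only [gTd, h1, h2, hb1, hb2, if_true, if_false] at hzp <;>
        first
          | omega
          | exact hdAB h2 hb2
    · exfalso
      rcases hax with h | h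
      · exact h1 (h ▸ ha)
      · exact h2 (h ▸ ha)
  have hne : (2*p-1) ≠ 2*p := by omega
  have hsub : ({2*p-1, 2*p} : Finset ℕ) ⊆ A := by
    intro x hx
    simp only [Finset.mem_insert, Finset.mem_singleton] at hx
    rcases hx with rfl | rfl
    · exact hboth.1
    · exact hboth.2
  have hcard2 : ({2*p-1, 2*p} : Finset ℕ).card = 2 := by
    rw [Finset.card_insert_of_notMem (by simp [hne]), Finset.card_singleton]
  refine ⟨p, hpIcc.1, hpIcc.2, (Finset.eq_of_subset_of_card_le hsub (by omega)).symm⟩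

lemma inst_ne (t : ℕ) (S : ℕ → Finset ℕ) (hS : IsBalancedCompanionFamily t S) :
    ∀ i ∈ Finset.Icc 1 (t+1), ∃ j ∈ Finset.Icc 1 (2*t+2), ffd S i j ≠ 0 := by
  classical
  obtain ⟨hcard, hdisj, hcover, hsum⟩ := hS
  intro i hi
  have hi' := Finset.mem_Icc.mp hi
  have hm1 : 2*i-1 ∈ Finset.Icc 1 (2*t+2) := Finset.mem_Icc.mpr (by omega)
  have hm2 : 2*i ∈ Finset.Icc 1 (2*t+2) := Finset.mem_Icc.mpr (by omega)
  have hA := hcard (2*i-1) hm1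
  have hB := hcard (2*i) hm2
  have hABdisj : Disjoint (S (2*i-1)) (S (2*i)) := hdisj _ hm1 _ hm2 (by omega)
  by_contra hcon
  push_neg at hcon
  have hzA : ∀ j ∈ Finset.Icc 1 (2*t+2), gTd (S (2*i-1)) j - gTd (S (2*i)) j = 0 := by
    intro j hj
    have := hcon j hj
    simpa [ffd] using this
  have hzB : ∀ j ∈ Finset.Icc 1 (2*t+2), gTd (S (2*i)) j - gTd (S (2*i-1)) j = 0 := by
    intro j hj
    have := hzA j hj
    omega
  obtain ⟨p, hp1, hp2, hpA⟩ := domino_of_zero t _ _ hA.1 hA.2 hABdisj hzA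
  obtain ⟨q, hq1, hq2, hqB⟩ := domino_of_zero t _ _ hB.1 hB.2 hABdisj.symm hzB
  have hsumA : (S (2*i-1)).sum id = 4*p-1 := by
    rw [hpA, Finset.sum_insert (by simp; omega), Finset.sum_singleton]
    simp only [id]
    omega
  have hsumB : (S (2*i)).sum id = 4*q-1 := by
    rw [hqB, Finset.sum_insert (by simp; omega), Finset.sum_singleton]
    simp only [id]
    omega
  have := hsum i hi
  have hpq : p = q := by omega
  subst hpq
  rw [hpA, hqB] at hABdisj
  have : (2*p-1) ∈ ({2*p-1, 2*p} : Finset ℕ) := by simp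
  exact (Finset.disjoint_left.mp hABdisj this) this

lemma inst_deg (t : ℕ) (S : ℕ → Finset ℕ) (hS : IsBalancedCompanionFamily t S) :
    ∀ j ∈ Finset.Icc 1 (2*t+2),
      ((Finset.Icc 1 (t+1)).filter (fun i => ffd S i j ≠ 0)).card ≤ 2 := by
  classical
  obtain ⟨hcard, hdisj, hcover, hsum⟩ := hS
  have huniq : ∀ x : ℕ, ∀ a ∈ Finset.Icc 1 (2*t+2), ∀ b ∈ Finset.Icc 1 (2*t+2),
      x ∈ S a → x ∈ S b → a = b := by
    intro x a ha b hb hxa hxb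
    by_contra hne
    exact (Finset.disjoint_left.mp (hdisj a ha b hb hne) hxa) hxb
  intro j hj
  have hsub : (Finset.Icc 1 (t+1)).filter (fun i => ffd S i j ≠ 0) ⊆
      ((Finset.Icc 1 (t+1)).filter (fun i => 2*j-1 ∈ S (2*i-1) ∪ S (2*i))) ∪
      ((Finset.Icc 1 (t+1)).filter (fun i => 2*j ∈ S (2*i-1) ∪ S (2*i))) := by
    intro i hi
    obtain ⟨hiI, hif⟩ := Finset.mem_filter.mp hi
    by_contra hcon
    rw [Finset.mem_union] at hcon
    push_neg at hcon
    obtain ⟨hc1, hc2⟩ := hcon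
    have h1 : 2*j-1 ∉ S (2*i-1) ∪ S (2*i) := fun h => hc1 (Finset.mem_filter.mpr ⟨hiI, h⟩)
    have h2 : 2*j ∉ S (2*i-1) ∪ S (2*i) := fun h => hc2 (Finset.mem_filter.mpr ⟨hiI, h⟩)
    rw [Finset.mem_union] at h1 h2
    push_neg at h1 h2
    apply hif
    simp [ffd, gTd, h1.1, h1.2, h2.1, h2.2]
  have hone : ∀ x : ℕ, ((Finset.Icc 1 (t+1)).filter (fun i => x ∈ S (2*i-1) ∪ S (2*i))).card ≤ 1 := by
    intro x
    rw [Finset.card_le_one]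
    intro a haf b hbf
    obtain ⟨haI, hax⟩ := Finset.mem_filter.mp haf
    obtain ⟨hbI, hbx⟩ := Finset.mem_filter.mp hbf
    have haI' := Finset.mem_Icc.mp haI
    have hbI' := Finset.mem_Icc.mp hbI
    rw [Finset.mem_union] at hax hbx
    have hma : ∃ ca, (ca = 2*a-1 ∨ ca = 2*a) ∧ x ∈ S ca := by
      rcases hax with h | h
      · exact ⟨2*a-1, Or.inl rfl, h⟩
      · exact ⟨2*a, Or.inr rfl, h⟩
    have hmb : ∃ cb, (cb = 2*b-1 ∨ cb = 2*b) ∧ x ∈ S cb := by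
      rcases hbx with h | h
      · exact ⟨2*b-1, Or.inl rfl, h⟩
      · exact ⟨2*b, Or.inr rfl, h⟩
    obtain ⟨ca, hca, hxa⟩ := hma
    obtain ⟨cb, hcb, hxb⟩ := hmb
    have hcaI : ca ∈ Finset.Icc 1 (2*t+2) := Finset.mem_Icc.mpr (by omega)
    have hcbI : cb ∈ Finset.Icc 1 (2*t+2) := Finset.mem_Icc.mpr (by omega)
    have := huniq x ca hcaI cb hcbI hxa hxb
    omega
  calc ((Finset.Icc 1 (t+1)).filter (fun i => ffd S i j ≠ 0)).card
      ≤ _ := Finset.card_le_card hsub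
    _ ≤ _ := Finset.card_union_le _ _
    _ ≤ 2 := by
        have := hone (2*j-1)
        have := hone (2*j)
        omega


/-- For every balanced companion family on `{1,…,4(t+1)}`, some collection of
popularity swaps of magnitude 1 produces total set discrepancy at least
`(2/3)(t + 2/3)`. -/
theorem total_set_discrepancy_lower_bound (t : ℕ) (ht : 0 < t)
    (S : ℕ → Finset ℕ) (hS : IsBalancedCompanionFamily t S) :
    ∃ π : ℕ → ℕ, IsSwapCollection (4*(t+1)) 1 π ∧
      (2/3 : ℚ) * ((t : ℚ) + 2/3) ≤ (totalSetDiscrepancy t S π : ℚ) := by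
  classical
  obtain ⟨X, hXV, hsat⟩ := lemmaA (ffd S) (Finset.Icc 1 (2*t+2)) (Finset.Icc 1 (t+1))
    (inst_ne t S hS) (inst_deg t S hS)
  obtain ⟨hcard, hdisj, hcover, hsum⟩ := hS
  have hXb : ∀ j ∈ X, 1 ≤ j := fun j hj => (Finset.mem_Icc.mp (hXV hj)).1
  refine ⟨swapPi X, swapPi_swap t X hXV, ?_⟩
  -- discrepancy identity
  have hdisc : ∀ i ∈ Finset.Icc 1 (t+1),
      ((S (2*i-1)).sum fun x => (swapPi X x : ℤ)) - ((S (2*i)).sum fun x => (swapPi X x : ℤ))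
        = ∑ j ∈ X, ffd S i j := by
    intro i hi
    have hi' := Finset.mem_Icc.mp hi
    have hm1 : 2*i-1 ∈ Finset.Icc 1 (2*t+2) := Finset.mem_Icc.mpr (by omega)
    have hm2 : 2*i ∈ Finset.Icc 1 (2*t+2) := Finset.mem_Icc.mpr (by omega)
    have hA := (hcard (2*i-1) hm1).1
    have hB := (hcard (2*i) hm2).1
    have hTA : ∀ x ∈ S (2*i-1), 1 ≤ x := fun x hx => (Finset.mem_Icc.mp (hA hx)).1
    have hTB : ∀ x ∈ S (2*i), 1 ≤ x := fun x hx => (Finset.mem_Icc.mp (hB hx)).1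
    rw [key_sum X _ hXb hTA, key_sum X _ hXb hTB]
    have hbase : (∑ x ∈ S (2*i-1), (x:ℤ)) = ∑ x ∈ S (2*i), (x:ℤ) := by
      have hc := congrArg (fun n : ℕ => (n : ℤ)) (hsum i hi)
      simp only [Finset.sum_apply, id] at hc
      push_cast at hc
      simpa using hc
    rw [hbase]
    simp only [ffd]
    rw [Finset.sum_sub_distrib]
    ring
  have hD : totalSetDiscrepancy t S (swapPi X) = ∑ i ∈ Finset.Icc 1 (t+1), |∑ j ∈ X, ffd S i j| := by
    unfold totalSetDiscrepancy
    apply Finset.sum_congr rfl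
    intro i hi
    rw [hdisc i hi]
  have hge : (((Finset.Icc 1 (t+1)).filter (fun i => (∑ j ∈ X, ffd S i j) ≠ 0)).card : ℤ) ≤
      totalSetDiscrepancy t S (swapPi X) := by
    rw [hD]
    calc (((Finset.Icc 1 (t+1)).filter (fun i => (∑ j ∈ X, ffd S i j) ≠ 0)).card : ℤ)
        = ∑ _i ∈ (Finset.Icc 1 (t+1)).filter (fun i => (∑ j ∈ X, ffd S i j) ≠ 0), (1:ℤ) := by simp
      _ ≤ ∑ i ∈ (Finset.Icc 1 (t+1)).filter (fun i => (∑ j ∈ X, ffd S i j) ≠ 0),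
            |∑ j ∈ X, ffd S i j| :=
          Finset.sum_le_sum (fun i hi => Int.one_le_abs ((Finset.mem_filter.mp hi).2))
      _ ≤ ∑ i ∈ Finset.Icc 1 (t+1), |∑ j ∈ X, ffd S i j| :=
          Finset.sum_le_sum_of_subset_of_nonneg (Finset.filter_subset _ _)
            (fun i _ _ => abs_nonneg _)
  have hIc : (Finset.Icc 1 (t+1)).card = t+1 := by simp
  rw [hIc] at hsat
  have hq1 : (((Finset.Icc 1 (t+1)).filter (fun i => (∑ j ∈ X, ffd S i j) ≠ 0)).card : ℚ) ≤
      ((totalSetDiscrepancy t S (swapPi X) : ℤ) : ℚ) := by exact_mod_cast hge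
  have hq2 : 2*((t:ℚ)+1) ≤
      3*((((Finset.Icc 1 (t+1)).filter (fun i => (∑ j ∈ X, ffd S i j) ≠ 0)).card : ℚ)) := by
    exact_mod_cast hsat
  linarith
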